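/- In the universal enveloping algebra U(g) of a simple Lie algebra g, with Ω_g = η^{ab} x_a⊗x_b, one has α_i^{jk} [[x_k⊗1, Ω_g], [x_j⊗1, Ω_g]] = α_i^{jk} α_j^{cr} α_k^{bs} α_{sr}^a (x_a ⊗ {x_b,x_c} + {x_b,x_c} ⊗ x_a). -/

import Mathlib

open TensorProduct Matrix

set_option linter.unusedSectionVars false
set_option maxHeartbeats 1000000

/-- The commutator `[x,y] = xy - yx` in an associative algebra. -/
def comm' {A : Type*} [Ring A] (x y : A) : A := x * y - y * x

/-- The symmetrized product `{x,y} = (xy + yx)/2`. -/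
noncomputable def acomm' {A : Type*} [Ring A] [Algebra ℂ A] (x y : A) : A :=
  (2⁻¹ : ℂ) • (x * y + y * x)

section aux

lemma comm'_tmul {A B : Type*} [Ring A] [Ring B] [Algebra ℂ A] [Algebra ℂ B]
    (a c : A) (b d : B) :
    comm' (a ⊗ₜ[ℂ] b) (c ⊗ₜ[ℂ] d)
      = comm' a c ⊗ₜ[ℂ] acomm' b d + acomm' a c ⊗ₜ[ℂ] comm' b d := by
  simp only [comm', acomm', Algebra.TensorProduct.tmul_mul_tmul, sub_tmul, tmul_sub,
    add_tmul, tmul_add, smul_tmul', tmul_smul, smul_sub, smul_add, ← smul_tmul']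
  module

lemma comm'_sum_right {A : Type*} [Ring A] {γ : Type*} (s : Finset γ) (y : A) (f : γ → A) :
    comm' y (∑ i ∈ s, f i) = ∑ i ∈ s, comm' y (f i) := by
  simp [comm', Finset.mul_sum, Finset.sum_mul, ← Finset.sum_sub_distrib]

lemma comm'_sum_left {A : Type*} [Ring A] {γ : Type*} (s : Finset γ) (y : A) (f : γ → A) :
    comm' (∑ i ∈ s, f i) y = ∑ i ∈ s, comm' (f i) y := by
  simp [comm', Finset.mul_sum, Finset.sum_mul, ← Finset.sum_sub_distrib]

lemma comm'_smul_right {A : Type*} [Ring A] [Algebra ℂ A] (c : ℂ) (x y : A) :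
    comm' x (c • y) = c • comm' x y := by
  simp [comm', mul_smul_comm, smul_mul_assoc, smul_sub]

lemma comm'_smul_left {A : Type*} [Ring A] [Algebra ℂ A] (c : ℂ) (x y : A) :
    comm' (c • x) y = c • comm' x y := by
  simp [comm', mul_smul_comm, smul_mul_assoc, smul_sub]

lemma comm'_one_left {A : Type*} [Ring A] (y : A) : comm' 1 y = 0 := by
  simp [comm']

lemma acomm'_one_left {A : Type*} [Ring A] [Algebra ℂ A] (y : A) : acomm' 1 y = y := by
  simp only [acomm', one_mul, mul_one]
  module

end aux

section scalars
variable {ι : Type*} [Fintype ι] [DecidableEq ι]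

lemma sum_rot (f : ι → ι → ι → ℂ) :
    (∑ p, ∑ q, ∑ e, f p q e) = ∑ q, ∑ e, ∑ p, f p q e := by
  rw [Finset.sum_comm]
  exact Finset.sum_congr rfl fun _ _ => Finset.sum_comm

lemma etainv_symm (η ηinv : ι → ι → ℂ) (hsymm : ∀ a b, η a b = η b a)
    (hηinv : ∀ a c, (∑ b, η a b * ηinv b c) = if a = c then 1 else 0) :
    ∀ a b, ηinv a b = ηinv b a := by
  set M : Matrix ι ι ℂ := Matrix.of η with hM
  set N : Matrix ι ι ℂ := Matrix.of ηinv with hN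
  have hMN : M * N = 1 := by
    ext a c
    simpa [Matrix.mul_apply, hM, hN, Matrix.one_apply] using hηinv a c
  have hMs : Mᵀ = M := by
    ext a c; simp [hM, Matrix.transpose_apply, hsymm a c]
  have hNt : Nᵀ * M = 1 := by
    have h2 : (M * N)ᵀ = 1 := by rw [hMN]; simp
    rw [Matrix.transpose_mul, hMs] at h2
    exact h2
  have hfin : Nᵀ = N := by
    calc Nᵀ = Nᵀ * (M * N) := by rw [hMN, mul_one]
    _ = (Nᵀ * M) * N := by rw [mul_assoc]
    _ = N := by rw [hNt, one_mul]
  intro a b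
  have := congrFun (congrFun hfin b) a
  simpa [hN, Matrix.transpose_apply] using this

lemma invariance (α : ι → ι → ι → ℂ) (η : ι → ι → ℂ)
    (hη : ∀ a b, η a b = ∑ c, ∑ d, α a c d * α b d c)
    (hJac : ∀ a b c d, (∑ e, α a b e * α e c d)
      = (∑ e, α b c e * α a e d) - ∑ e, α a c e * α b e d) :
    ∀ a b c, (∑ e, α a b e * η e c) = ∑ e, α b c e * η e a := by
  have tr3cyc : ∀ u v w : ι,
      (∑ p, ∑ q, ∑ e, α u p e * (α v e q * α w q p))
        = ∑ p, ∑ q, ∑ e, α v p e * (α w e q * α u q p) := by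
    intro u v w
    rw [sum_rot (f := fun p q e => α u p e * (α v e q * α w q p)),
        sum_rot (f := fun q e p => α u p e * (α v e q * α w q p))]
    refine Finset.sum_congr rfl fun p _ => Finset.sum_congr rfl fun q _ =>
      Finset.sum_congr rfl fun e _ => by ring
  have key : ∀ a b c : ι, (∑ e, α a b e * η e c)
      = (∑ p, ∑ q, ∑ e, α b p e * (α a e q * α c q p))
        - ∑ p, ∑ q, ∑ e, α a p e * (α b e q * α c q p) := by
    intro a b c
    have h1 : (∑ e, α a b e * η e c)
        = ∑ p, ∑ q, (∑ e, α a b e * α e p q) * α c q p := by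
      simp only [hη, Finset.mul_sum, Finset.sum_mul]
      rw [sum_rot (f := fun e p q => α a b e * (α e p q * α c q p))]
      exact Finset.sum_congr rfl fun p _ => Finset.sum_congr rfl fun q _ =>
        Finset.sum_congr rfl fun e _ => by ring
    rw [h1]
    rw [← Finset.sum_sub_distrib]
    refine Finset.sum_congr rfl fun p _ => ?_
    rw [← Finset.sum_sub_distrib]
    refine Finset.sum_congr rfl fun q _ => ?_
    rw [hJac a b p q, sub_mul, Finset.sum_mul, Finset.sum_mul]
    congr 1 <;> exact Finset.sum_congr rfl fun e _ => by ring
  intro a b c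
  rw [key a b c, key b c a, tr3cyc c b a, tr3cyc b c a, tr3cyc c a b]

lemma aup_anti (α : ι → ι → ι → ℂ) (η ηinv : ι → ι → ℂ) (αup : ι → ι → ι → ℂ)
    (hAnti : ∀ a b c, α a b c = - α b a c)
    (hinv : ∀ a b c, (∑ e, α a b e * η e c) = ∑ e, α b c e * η e a)
    (hηinv : ∀ a c, (∑ b, η a b * ηinv b c) = if a = c then 1 else 0)
    (hs : ∀ a b, ηinv a b = ηinv b a)
    (hαup : ∀ a b c, αup a b c = ∑ d, ηinv b d * α a d c) :
    ∀ i j k, αup i j k = - αup i k j := by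
  set F : ι → ι → ι → ℂ := fun a b c => ∑ e, α a b e * η e c with hF
  have hFanti : ∀ i d m, F i d m = - F i m d := by
    intro i d m
    have h1 : F i d m = F d m i := hinv i d m
    have h2 : F d m i = - F m d i := by
      rw [hF]; simp only
      rw [← Finset.sum_neg_distrib]
      exact Finset.sum_congr rfl fun e _ => by rw [hAnti d m e]; ring
    have h3 : F m d i = F i m d := (hinv m d i).trans (hinv d i m)
    rw [h1, h2, h3]
  have hraise : ∀ a b c, (∑ m, F a b m * ηinv m c) = α a b c := by
    intro a b c
    have step : (∑ m, F a b m * ηinv m c)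
        = ∑ m, ∑ e, α a b e * (η e m * ηinv m c) := by
      refine Finset.sum_congr rfl fun m _ => ?_
      rw [hF]; simp only [Finset.sum_mul]
      exact Finset.sum_congr rfl fun e _ => by ring
    rw [step, Finset.sum_comm]
    have step2 : ∀ e, (∑ m, α a b e * (η e m * ηinv m c))
        = α a b e * ∑ m, η e m * ηinv m c := by
      intro e; rw [Finset.mul_sum]
    simp only [step2, hηinv]
    simp
  intro i j k
  have e1 : αup i j k = ∑ d, ∑ m, ηinv j d * (F i d m * ηinv m k) := by
    rw [hαup]
    exact Finset.sum_congr rfl fun d _ => by rw [← hraise i d k, Finset.mul_sum]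
  have e2 : αup i k j = ∑ d, ∑ m, ηinv k d * (F i d m * ηinv m j) := by
    rw [hαup]
    exact Finset.sum_congr rfl fun d _ => by rw [← hraise i d j, Finset.mul_sum]
  rw [e1, e2]
  rw [Finset.sum_comm, ← Finset.sum_neg_distrib]
  refine Finset.sum_congr rfl fun d _ => ?_
  rw [← Finset.sum_neg_distrib]
  refine Finset.sum_congr rfl fun m _ => ?_
  rw [hFanti i d m, hs j m, hs d k]
  ring

end scalars

section lie
variable {L : Type*} [LieRing L] [LieAlgebra ℂ L]
  {ι : Type*} [Fintype ι] [DecidableEq ι]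
  (x : Module.Basis ι ℂ L) (α : ι → ι → ι → ℂ)

lemma sum_lie' (s : Finset ι) (f : ι → L) (z : L) :
    ⁅∑ c ∈ s, f c, z⁆ = ∑ c ∈ s, ⁅f c, z⁆ := by
  induction s using Finset.induction with
  | empty => simp
  | @insert _ _ h ih => rw [Finset.sum_insert h, Finset.sum_insert h, add_lie, ih]

lemma lie_sum' (s : Finset ι) (f : ι → L) (z : L) :
    ⁅z, ∑ c ∈ s, f c⁆ = ∑ c ∈ s, ⁅z, f c⁆ := by
  induction s using Finset.induction with
  | empty => simp
  | @insert _ _ h ih => rw [Finset.sum_insert h, Finset.sum_insert h, lie_add, ih]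

lemma repr_alpha (hα : ∀ a b, ⁅x a, x b⁆ = ∑ c, α a b c • x c) :
    ∀ a b c, α a b c = x.repr ⁅x a, x b⁆ c := by
  intro a b c
  rw [hα]
  simp [map_sum, Finsupp.single_apply, Module.Basis.repr_self]

lemma alpha_anti (hα : ∀ a b, ⁅x a, x b⁆ = ∑ c, α a b c • x c) :
    ∀ a b c, α a b c = - α b a c := by
  intro a b c
  rw [repr_alpha x α hα a b c, repr_alpha x α hα b a c, ← lie_skew, map_neg]
  simp

lemma jacobi_coord (hα : ∀ a b, ⁅x a, x b⁆ = ∑ c, α a b c • x c) :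
    ∀ a b c d, (∑ e, α a b e * α e c d)
      = (∑ e, α b c e * α a e d) - ∑ e, α a c e * α b e d := by
  intro a b c d
  have h1 : ⁅⁅x a, x b⁆, x c⁆ = ∑ e, α a b e • ⁅x e, x c⁆ := by
    rw [hα a b, sum_lie']
    exact Finset.sum_congr rfl fun e _ => smul_lie _ _ _
  have h2 : ⁅x a, ⁅x b, x c⁆⁆ = ∑ e, α b c e • ⁅x a, x e⁆ := by
    rw [hα b c, lie_sum']
    exact Finset.sum_congr rfl fun e _ => lie_smul _ _ _
  have h3 : ⁅x b, ⁅x a, x c⁆⁆ = ∑ e, α a c e • ⁅x b, x e⁆ := by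
    rw [hα a c, lie_sum']
    exact Finset.sum_congr rfl fun e _ => lie_smul _ _ _
  have hl := lie_lie (x a) (x b) (x c)
  rw [h1, h2, h3] at hl
  have := congrArg (fun z => x.repr z d) hl
  simpa [map_sum, map_sub, ← repr_alpha x α hα] using this

end lie

lemma sum7_eq_sumprod {M : Type*} [AddCommMonoid M] {ι : Type*} [Fintype ι]
    (F : ι → ι → ι → ι → ι → ι → ι → M) :
    (∑ j, ∑ k, ∑ c, ∑ r, ∑ b, ∑ s, ∑ a, F j k c r b s a)
      = ∑ p : ι × ι × ι × ι × ι × ι × ι,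
          F p.1 p.2.1 p.2.2.1 p.2.2.2.1 p.2.2.2.2.1 p.2.2.2.2.2.1 p.2.2.2.2.2.2 := by
  simp [Fintype.sum_prod_type]

/-- In `U(g) ⊗ U(g)` for a finite dimensional complex simple Lie algebra `g`,
with `Ω = ∑ ηinv a b • (x_a ⊗ x_b)`, one has
`α_i^{jk} [[x_k⊗1, Ω], [x_j⊗1, Ω]]
  = α_i^{jk} α_j^{cr} α_k^{bs} α_{sr}^a (x_a ⊗ {x_b,x_c} + {x_b,x_c} ⊗ x_a)`. -/
theorem contracted_double_commutator_identity
    {L : Type*} [LieRing L] [LieAlgebra ℂ L]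
    [FiniteDimensional ℂ L] [LieAlgebra.IsSimple ℂ L]
    {ι : Type*} [Fintype ι] [DecidableEq ι]
    (x : Module.Basis ι ℂ L) (α : ι → ι → ι → ℂ)
    (hα : ∀ a b, ⁅x a, x b⁆ = ∑ c, α a b c • x c)
    (η : ι → ι → ℂ)
    (hη : ∀ a b, η a b = ∑ c, ∑ d, α a c d * α b d c)
    (ηinv : ι → ι → ℂ)
    (hηinv : ∀ a c, (∑ b, η a b * ηinv b c) = if a = c then 1 else 0)
    (αup : ι → ι → ι → ℂ)
    (hαup : ∀ a b c, αup a b c = ∑ d, ηinv b d * α a d c)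
    (Ω : UniversalEnvelopingAlgebra ℂ L ⊗[ℂ] UniversalEnvelopingAlgebra ℂ L)
    (hΩ : Ω = ∑ a, ∑ b, ηinv a b •
      ((UniversalEnvelopingAlgebra.ι ℂ (x a)) ⊗ₜ[ℂ] (UniversalEnvelopingAlgebra.ι ℂ (x b)))) :
    ∀ i,
      (∑ j, ∑ k, αup i j k •
        comm'
          (comm' ((UniversalEnvelopingAlgebra.ι ℂ (x k)) ⊗ₜ[ℂ]
            (1 : UniversalEnvelopingAlgebra ℂ L)) Ω)
          (comm' ((UniversalEnvelopingAlgebra.ι ℂ (x j)) ⊗ₜ[ℂ]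
            (1 : UniversalEnvelopingAlgebra ℂ L)) Ω))
      = ∑ j, ∑ k, ∑ r, ∑ s, ∑ a, ∑ b, ∑ c,
          (αup i j k * αup j c r * αup k b s * α s r a) •
          ((UniversalEnvelopingAlgebra.ι ℂ (x a)) ⊗ₜ[ℂ]
              (acomm' (UniversalEnvelopingAlgebra.ι ℂ (x b))
                (UniversalEnvelopingAlgebra.ι ℂ (x c)))
            + (acomm' (UniversalEnvelopingAlgebra.ι ℂ (x b))
                (UniversalEnvelopingAlgebra.ι ℂ (x c))) ⊗ₜ[ℂ]
              (UniversalEnvelopingAlgebra.ι ℂ (x a))) := by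
  intro i
  have hηs : ∀ a b, η a b = η b a := by
    intro a b
    rw [hη a b, hη b a, Finset.sum_comm]
    exact Finset.sum_congr rfl fun c _ => Finset.sum_congr rfl fun d _ => by ring
  have hs := etainv_symm η ηinv hηs hηinv
  have hAnti := alpha_anti x α hα
  have hJ := jacobi_coord x α hα
  have hinvar := invariance α η hη hJ
  have haupA := aup_anti α η ηinv αup hAnti hinvar hηinv hs hαup
  have hcommX : ∀ a b, comm' (UniversalEnvelopingAlgebra.ι ℂ (x a)) (UniversalEnvelopingAlgebra.ι ℂ (x b)) = ∑ s, α a b s • (UniversalEnvelopingAlgebra.ι ℂ (x s)) := by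
    intro a b
    letI : LieRing (UniversalEnvelopingAlgebra ℂ L) := LieRing.ofAssociativeRing
    have h1 : UniversalEnvelopingAlgebra.ι ℂ (x a) * UniversalEnvelopingAlgebra.ι ℂ (x b) - UniversalEnvelopingAlgebra.ι ℂ (x b) * UniversalEnvelopingAlgebra.ι ℂ (x a) = UniversalEnvelopingAlgebra.ι ℂ ⁅x a, x b⁆ := by
      rw [LieHom.map_lie, Ring.lie_def]
    rw [comm', h1, hα, ← LieHom.coe_toLinearMap, map_sum]
    simp
  have hup : ∀ k b s, (∑ a, ηinv a b * α k a s) = αup k b s := by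
    intro k b s
    rw [hαup]
    exact Finset.sum_congr rfl fun d _ => by rw [hs d b]
  have hT : ∀ k, comm' ((UniversalEnvelopingAlgebra.ι ℂ (x k)) ⊗ₜ[ℂ] (1 : UniversalEnvelopingAlgebra ℂ L)) Ω
      = ∑ b, ∑ s, αup k b s • ((UniversalEnvelopingAlgebra.ι ℂ (x s)) ⊗ₜ[ℂ] (UniversalEnvelopingAlgebra.ι ℂ (x b))) := by
    intro k
    rw [hΩ]
    simp only [comm'_sum_right, comm'_smul_right, comm'_tmul, comm'_one_left,
      acomm'_one_left, tmul_zero, add_zero, hcommX]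
    simp only [sum_tmul, ← smul_tmul', Finset.smul_sum, smul_smul]
    rw [Finset.sum_comm]
    refine Finset.sum_congr rfl fun b _ => ?_
    rw [Finset.sum_comm]
    refine Finset.sum_congr rfl fun s _ => ?_
    rw [← Finset.sum_smul, hup]
  simp only [hT]
  simp only [comm'_sum_left, comm'_sum_right, comm'_smul_left, comm'_smul_right, comm'_tmul,
    hcommX, sum_tmul, tmul_sum, ← smul_tmul', tmul_smul, smul_add, Finset.smul_sum, smul_smul,
    Finset.sum_add_distrib]
  rw [sum7_eq_sumprod, sum7_eq_sumprod, sum7_eq_sumprod, sum7_eq_sumprod]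
  congr 1
  · refine Fintype.sum_equiv
      ⟨fun p => (p.1, p.2.1, p.2.2.2.1, p.2.2.2.2.2.1, p.2.2.2.2.2.2, p.2.2.2.2.1, p.2.2.1),
       fun q => (q.1, q.2.1, q.2.2.2.2.2.2, q.2.2.1, q.2.2.2.2.2.1, q.2.2.2.1, q.2.2.2.2.1),
       fun p => rfl, fun q => rfl⟩ _ _ ?_
    rintro ⟨j, k, c, r, b, s, a⟩
    dsimp only [Equiv.coe_fn_mk]
    match_scalars <;> ring
  · refine Fintype.sum_equiv
      ⟨fun p => (p.1, p.2.1, p.2.2.1, p.2.2.2.2.1, p.2.2.2.2.2.2, p.2.2.2.2.2.1, p.2.2.2.1),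
       fun q => (q.1, q.2.1, q.2.2.1, q.2.2.2.2.2.2, q.2.2.2.1, q.2.2.2.2.2.1, q.2.2.2.2.1),
       fun p => rfl, fun q => rfl⟩ _ _ ?_
    rintro ⟨j, k, c, r, b, s, a⟩
    dsimp only [Equiv.coe_fn_mk]
    rw [haupA j r c, haupA k s b]
    match_scalars <;> ring
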